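/- Covering lemma (Popineau–Stora): Let M be a smooth manifold with a metric d (or any metrizable topology) and n ≥ 2. For each proper nonempty subset I ⊊ {1,…,n}, let C_I = {(x₁,…,xₙ) ∈ Mⁿ : xᵢ ≠ xⱼ for all i ∈ I, j ∉ I}. Then ⋃_{∅≠I⊊{1,…,n}} C_I = Mⁿ ∖ dₙ, where dₙ = {(x,…,x)} is the small diagonal. Moreover, each point of Mⁿ∖dₙ lies in some C_I of the stronger form U^I × V^J with U, V open and disjoint closures, J = {1,…,n}∖I. -/

import Mathlib

open Metric

/-- **Covering lemma of Popineau–Stora.** Let `M` be a metric space and `n ≥ 2`. For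
each proper nonempty `I ⊊ {1,…,n}`, let `C_I = {x ∈ Mⁿ : xᵢ ≠ xⱼ ∀ i ∈ I, j ∉ I}`.
Then `⋃_I C_I = Mⁿ ∖ dₙ` where `dₙ` is the small diagonal; moreover each point of
`Mⁿ ∖ dₙ` lies in a set `U^I × V^J ⊆ C_I` with `U, V` open with disjoint closures. -/
theorem popineau_stora_covering {n : ℕ} (hn : 2 ≤ n)
    (M : Type) [MetricSpace M] :
    ({x : Fin n → M | ∃ I : Finset (Fin n), I.Nonempty ∧ I ≠ Finset.univ ∧
        ∀ i ∈ I, ∀ j ∉ I, x i ≠ x j}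
      = {x : Fin n → M | ¬ ∀ i j : Fin n, x i = x j}) ∧
    (∀ x : Fin n → M, (¬ ∀ i j : Fin n, x i = x j) →
      ∃ (I : Finset (Fin n)) (U V : Set M), I.Nonempty ∧ I ≠ Finset.univ ∧
        IsOpen U ∧ IsOpen V ∧ Disjoint (closure U) (closure V) ∧
        (∀ i ∈ I, x i ∈ U) ∧ (∀ j ∉ I, x j ∈ V)) := by
  have key : ∀ x : Fin n → M, (¬ ∀ i j : Fin n, x i = x j) →
      ∃ (I : Finset (Fin n)) (U V : Set M), I.Nonempty ∧ I ≠ Finset.univ ∧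
        IsOpen U ∧ IsOpen V ∧ Disjoint (closure U) (closure V) ∧
        (∀ i ∈ I, x i ∈ U) ∧ (∀ j ∉ I, x j ∈ V) := by
    intro x hx
    classical
    push_neg at hx
    obtain ⟨i, j, hij⟩ := hx
    -- set of indices whose coordinate differs from x i
    set S : Finset (Fin n) := Finset.univ.filter (fun k => x k ≠ x i) with hS
    have hjS : j ∈ S := by
      simp only [hS, Finset.mem_filter, Finset.mem_univ, true_and]
      exact fun h => hij h.symm
    have hSne : S.Nonempty := ⟨j, hjS⟩
    set ε : ℝ := S.inf' hSne (fun k => dist (x k) (x i)) with hε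
    have hεpos : 0 < ε := by
      rw [hε, Finset.lt_inf'_iff]
      intro k hk
      have : x k ≠ x i := by simpa [hS] using hk
      exact dist_pos.mpr this
    have hεle : ∀ k, x k ≠ x i → ε ≤ dist (x k) (x i) := by
      intro k hk
      apply Finset.inf'_le
      simp [hS, hk]
    refine ⟨Finset.univ.filter (fun k => dist (x k) (x i) < ε / 3),
      ball (x i) (ε / 3), (closedBall (x i) (2 * ε / 3))ᶜ, ?_, ?_, isOpen_ball,
      isClosed_closedBall.isOpen_compl, ?_, ?_, ?_⟩
    · refine ⟨i, ?_⟩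
      simp only [Finset.mem_filter, Finset.mem_univ, true_and, dist_self]
      positivity
    · intro h
      have : j ∈ Finset.univ.filter (fun k => dist (x k) (x i) < ε / 3) := by
        rw [h]; exact Finset.mem_univ j
      have h1 : dist (x j) (x i) < ε / 3 := by simpa using this
      have h2 : ε ≤ dist (x j) (x i) := hεle j (fun h => hij h.symm)
      linarith
    · have hU : closure (ball (x i) (ε / 3)) ⊆ closedBall (x i) (ε / 3) :=
        closure_ball_subset_closedBall
      have hV : closure ((closedBall (x i) (2 * ε / 3))ᶜ) ⊆
          {y | 2 * ε / 3 ≤ dist y (x i)} := by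
        apply closure_minimal
        · intro y hy
          simp only [Set.mem_compl_iff, mem_closedBall, not_le] at hy
          exact le_of_lt hy
        · exact isClosed_le continuous_const (continuous_id.dist continuous_const)
      refine Set.disjoint_left.mpr fun y hyU hyV => ?_
      have h1 : dist y (x i) ≤ ε / 3 := hU hyU
      have h2 : 2 * ε / 3 ≤ dist y (x i) := hV hyV
      linarith
    · intro k hk
      simpa [mem_ball] using (Finset.mem_filter.mp hk).2
    · intro k hk
      simp only [Finset.mem_filter, Finset.mem_univ, true_and, not_lt] at hk
      have hkne : x k ≠ x i := by
        intro h
        rw [h, dist_self] at hk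
        linarith
      have := hεle k hkne
      simp only [Set.mem_compl_iff, mem_closedBall, not_le]
      linarith
  refine ⟨?_, key⟩
  ext x
  constructor
  · rintro ⟨I, ⟨i, hi⟩, hIu, hI⟩ hconst
    obtain ⟨j, hj⟩ : ∃ j, j ∉ I := by
      by_contra h
      push_neg at h
      exact hIu (Finset.eq_univ_iff_forall.mpr h)
    exact hI i hi j hj (hconst i j)
  · intro hx
    obtain ⟨I, U, V, hne, hIu, _, _, hdisj, hU, hV⟩ := key x hx
    refine ⟨I, hne, hIu, fun i hi j hj h => ?_⟩
    have : x i ∈ closure U := subset_closure (hU i hi)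
    have h2 : x i ∈ closure V := h ▸ subset_closure (hV j hj)
    exact Set.disjoint_left.mp hdisj this h2
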